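/- Let Q = (0,1)^N be the open unit cube in ℝ^N and A, B two N×N real matrices. Let u : ℝ^N → ℝ^N be continuous on the closed cube [0,1]^N, differentiable at every point of Q with derivative Du(x), such that x ↦ tr(Du(x)) is Lebesgue integrable on Q and u(x) = Ax for every x ∈ ∂Q. Then ∫_Q (tr(Du(x)) − tr B)⁺ dx ≥ (tr(A − B))⁺ and ∫_Q (tr(Du(x)) − tr B)⁻ dx ≥ (tr(A − B))⁻, where a⁺ = max(a,0) and a⁻ = max(−a,0). -/

import Mathlib

open MeasureTheory

/-- The open unit cube `(0,1)^N` in `ℝ^N`. -/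
def openCube (N : ℕ) : Set (Fin N → ℝ) := Set.univ.pi fun _ => Set.Ioo (0 : ℝ) 1

lemma openCube_ae_eq (N : ℕ) :
    (openCube N : Set (Fin N → ℝ)) =ᵐ[volume] Set.Icc (0 : Fin N → ℝ) 1 := by
  have : openCube N = Set.univ.pi fun i : Fin N =>
      Set.Ioo ((0 : Fin N → ℝ) i) ((1 : Fin N → ℝ) i) := rfl
  rw [this]
  exact MeasureTheory.Measure.univ_pi_Ioo_ae_eq_Icc

lemma isOpen_openCube (N : ℕ) : IsOpen (openCube N) :=
  isOpen_set_pi Set.finite_univ (fun _ _ => isOpen_Ioo)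

lemma closure_openCube (N : ℕ) :
    closure (openCube N) = Set.Icc (0 : Fin N → ℝ) 1 := by
  rw [openCube, closure_pi_set, ← Set.pi_univ_Icc]
  ext x
  simp [closure_Ioo (by norm_num : (0:ℝ) ≠ 1)]

lemma mem_frontier_openCube (N : ℕ) (x : Fin N → ℝ)
    (hx : x ∈ Set.Icc (0 : Fin N → ℝ) 1) (hx' : x ∉ openCube N) :
    x ∈ frontier (openCube N) := by
  rw [frontier, (isOpen_openCube N).interior_eq, closure_openCube]
  exact ⟨hx, hx'⟩

lemma insertNth_mem_frontier (n : ℕ) (i : Fin (n+1)) (c : ℝ) (hc : c = 0 ∨ c = 1)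
    (x : Fin n → ℝ)
    (hx : x ∈ Set.Icc ((0 : Fin (n+1) → ℝ) ∘ Fin.succAbove i)
      ((1 : Fin (n+1) → ℝ) ∘ Fin.succAbove i)) :
    Fin.insertNth i c x ∈ frontier (openCube (n+1)) := by
  apply mem_frontier_openCube
  · have key : ∀ j, (0:ℝ) ≤ (Fin.insertNth i c x : Fin (n+1) → ℝ) j ∧
        (Fin.insertNth i c x : Fin (n+1) → ℝ) j ≤ (1:ℝ) := by
      intro j
      rcases eq_or_ne j i with rfl | hne
      · simp only [Fin.insertNth_apply_same]
        rcases hc with rfl | rfl <;> norm_num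
      · obtain ⟨k, rfl⟩ := Fin.exists_succAbove_eq hne
        simpa using And.intro (hx.1 k) (hx.2 k)
    exact ⟨fun j => (key j).1, fun j => (key j).2⟩
  · intro h
    have := h i (Set.mem_univ i)
    simp only [Fin.insertNth_apply_same] at this
    rcases hc with rfl | rfl
    · exact lt_irrefl _ this.1
    · exact lt_irrefl _ this.2

lemma continuous_face (n : ℕ) (i : Fin (n+1)) (c : ℝ)
    (A : Matrix (Fin (n+1)) (Fin (n+1)) ℝ) :
    Continuous (fun x : Fin n → ℝ => (A.mulVec (Fin.insertNth i c x)) i) := by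
  have h1 : Continuous (A.mulVecLin : (Fin (n+1) → ℝ) →ₗ[ℝ] (Fin (n+1) → ℝ)) :=
    LinearMap.continuous_of_finiteDimensional _
  exact (continuous_apply i).comp (h1.comp ((continuous_const).finInsertNth i continuous_id))

lemma face_diff (n : ℕ) (i : Fin (n+1)) (x : Fin n → ℝ)
    (A : Matrix (Fin (n+1)) (Fin (n+1)) ℝ) :
    (A.mulVec (Fin.insertNth i 1 x)) i - (A.mulVec (Fin.insertNth i 0 x)) i = A i i := by
  have : (Fin.insertNth i (1:ℝ) x : Fin (n+1) → ℝ) - Fin.insertNth i (0:ℝ) x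
      = Pi.single i 1 := by
    ext j
    rcases eq_or_ne j i with rfl | hne
    · simp
    · obtain ⟨k, rfl⟩ := Fin.exists_succAbove_eq hne
      simp [Pi.single_eq_of_ne (Fin.succAbove_ne i k)]
  calc (A.mulVec (Fin.insertNth i 1 x)) i - (A.mulVec (Fin.insertNth i 0 x)) i
      = (A.mulVec ((Fin.insertNth i (1:ℝ) x : Fin (n+1) → ℝ) - Fin.insertNth i (0:ℝ) x)) i := by
        rw [Matrix.mulVec_sub]; simp
    _ = A i i := by rw [this, Matrix.mulVec_single]; simp

lemma integral_const_face (n : ℕ) (i : Fin (n+1)) (r : ℝ) :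
    ∫ _x in Set.Icc ((0 : Fin (n+1) → ℝ) ∘ Fin.succAbove i)
      ((1 : Fin (n+1) → ℝ) ∘ Fin.succAbove i), r = r := by
  rw [setIntegral_const]
  have : volume (Set.Icc ((0 : Fin (n+1) → ℝ) ∘ Fin.succAbove i)
      ((1 : Fin (n+1) → ℝ) ∘ Fin.succAbove i)) = 1 := by
    rw [Real.volume_Icc_pi]; simp
  rw [measureReal_def, this]; simp

lemma trace_eq_sum (N : ℕ) (T : (Fin N → ℝ) →L[ℝ] (Fin N → ℝ)) :
    LinearMap.trace ℝ (Fin N → ℝ) (T : (Fin N → ℝ) →ₗ[ℝ] (Fin N → ℝ))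
      = ∑ i, T (Pi.single i 1) i := by
  rw [LinearMap.trace_eq_matrix_trace ℝ (Pi.basisFun ℝ (Fin N))]
  simp [Matrix.trace, LinearMap.toMatrix_apply]

lemma integral_trace_eq (n : ℕ)
    (A : Matrix (Fin (n+1)) (Fin (n+1)) ℝ)
    (u : (Fin (n+1) → ℝ) → Fin (n+1) → ℝ)
    (Du : (Fin (n+1) → ℝ) → ((Fin (n+1) → ℝ) →L[ℝ] (Fin (n+1) → ℝ)))
    (hcont : ContinuousOn u (Set.Icc (0 : Fin (n+1) → ℝ) 1))
    (hdiff : ∀ x ∈ openCube (n+1), HasFDerivAt u (Du x) x)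
    (hint : IntegrableOn
      (fun x => LinearMap.trace ℝ (Fin (n+1) → ℝ)
        (Du x : (Fin (n+1) → ℝ) →ₗ[ℝ] (Fin (n+1) → ℝ)))
      (openCube (n+1)))
    (hbdry : ∀ x ∈ frontier (openCube (n+1)), u x = A.mulVec x) :
    (∫ x in openCube (n+1),
      LinearMap.trace ℝ (Fin (n+1) → ℝ) (Du x : (Fin (n+1) → ℝ) →ₗ[ℝ] (Fin (n+1) → ℝ)))
      = Matrix.trace A := by
  have hfun : ∀ x, LinearMap.trace ℝ (Fin (n+1) → ℝ)
      (Du x : (Fin (n+1) → ℝ) →ₗ[ℝ] (Fin (n+1) → ℝ)) = ∑ i, Du x (Pi.single i 1) i :=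
    fun x => trace_eq_sum _ _
  have hae := openCube_ae_eq (n+1)
  have hIoo : (Set.pi Set.univ fun i : Fin (n+1) =>
      Set.Ioo ((0 : Fin (n+1) → ℝ) i) ((1 : Fin (n+1) → ℝ) i)) = openCube (n+1) := rfl
  have hint' : IntegrableOn (fun x => ∑ i, Du x (Pi.single i 1) i)
      (Set.Icc (0 : Fin (n+1) → ℝ) 1) := by
    have := hint.congr_set_ae hae.symm
    exact this.congr_fun (fun x _ => hfun x) measurableSet_Icc
  have hdiv := integral_divergence_of_hasFDerivAt_off_countable
    (0 : Fin (n+1) → ℝ) 1 zero_le_one u Du ∅ Set.countable_empty hcont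
    (fun x hx => hdiff x (hIoo ▸ hx.1)) hint'
  calc (∫ x in openCube (n+1),
      LinearMap.trace ℝ (Fin (n+1) → ℝ) (Du x : (Fin (n+1) → ℝ) →ₗ[ℝ] (Fin (n+1) → ℝ)))
      = ∫ x in Set.Icc (0 : Fin (n+1) → ℝ) 1, ∑ i, Du x (Pi.single i 1) i := by
        rw [setIntegral_congr_set hae]
        exact setIntegral_congr_fun measurableSet_Icc (fun x _ => hfun x)
    _ = Matrix.trace A := by
        rw [hdiv]
        have hface : ∀ (i : Fin (n+1)),
            ((∫ x in Set.Icc ((0 : Fin (n+1) → ℝ) ∘ Fin.succAbove i)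
                ((1 : Fin (n+1) → ℝ) ∘ Fin.succAbove i),
                u (Fin.insertNth i ((1 : Fin (n+1) → ℝ) i) x) i) -
              ∫ x in Set.Icc ((0 : Fin (n+1) → ℝ) ∘ Fin.succAbove i)
                ((1 : Fin (n+1) → ℝ) ∘ Fin.succAbove i),
                u (Fin.insertNth i ((0 : Fin (n+1) → ℝ) i) x) i) = A i i := by
          intro i
          have h1 : ∀ x ∈ Set.Icc ((0 : Fin (n+1) → ℝ) ∘ Fin.succAbove i)
              ((1 : Fin (n+1) → ℝ) ∘ Fin.succAbove i),
              u (Fin.insertNth i ((1 : Fin (n+1) → ℝ) i) x) i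
                = (A.mulVec (Fin.insertNth i (1:ℝ) x)) i := by
            intro x hx
            have : ((1 : Fin (n+1) → ℝ) i) = (1:ℝ) := rfl
            rw [this, hbdry _ (insertNth_mem_frontier n i 1 (Or.inr rfl) x hx)]
          have h0 : ∀ x ∈ Set.Icc ((0 : Fin (n+1) → ℝ) ∘ Fin.succAbove i)
              ((1 : Fin (n+1) → ℝ) ∘ Fin.succAbove i),
              u (Fin.insertNth i ((0 : Fin (n+1) → ℝ) i) x) i
                = (A.mulVec (Fin.insertNth i (0:ℝ) x)) i := by
            intro x hx
            have : ((0 : Fin (n+1) → ℝ) i) = (0:ℝ) := rfl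
            rw [this, hbdry _ (insertNth_mem_frontier n i 0 (Or.inl rfl) x hx)]
          rw [setIntegral_congr_fun measurableSet_Icc h1,
            setIntegral_congr_fun measurableSet_Icc h0]
          have hi1 : IntegrableOn (fun x : Fin n → ℝ => (A.mulVec (Fin.insertNth i (1:ℝ) x)) i)
              (Set.Icc ((0 : Fin (n+1) → ℝ) ∘ Fin.succAbove i)
                ((1 : Fin (n+1) → ℝ) ∘ Fin.succAbove i)) :=
            (continuous_face n i 1 A).continuousOn.integrableOn_compact isCompact_Icc
          have hi0 : IntegrableOn (fun x : Fin n → ℝ => (A.mulVec (Fin.insertNth i (0:ℝ) x)) i)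
              (Set.Icc ((0 : Fin (n+1) → ℝ) ∘ Fin.succAbove i)
                ((1 : Fin (n+1) → ℝ) ∘ Fin.succAbove i)) :=
            (continuous_face n i 0 A).continuousOn.integrableOn_compact isCompact_Icc
          rw [← integral_sub hi1 hi0]
          rw [setIntegral_congr_fun measurableSet_Icc
            (fun x _ => face_diff n i x A)]
          exact integral_const_face n i (A i i)
        rw [Finset.sum_congr rfl (fun i _ => hface i)]
        simp [Matrix.trace, Matrix.diag]

/-- Lower bounds for the relaxed bulk densities of the purely interfacial energies
`Ψ^±`: for any jump-free competitor `u` as in the cell formula (continuous on the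
closed cube, differentiable on `Q = (0,1)^N`, `tr(Du)` integrable, `u = Ax` on `∂Q`),
`∫_Q (tr(Du x) − tr B)⁺ dx ≥ (tr(A−B))⁺` and `∫_Q (tr(Du x) − tr B)⁻ dx ≥ (tr(A−B))⁻`,
where `a⁺ = max a 0` and `a⁻ = max (−a) 0`. -/
theorem integral_posPart_negPart_trace_lower_bound (N : ℕ) (hN : 1 ≤ N)
    (A B : Matrix (Fin N) (Fin N) ℝ)
    (u : (Fin N → ℝ) → Fin N → ℝ)
    (Du : (Fin N → ℝ) → ((Fin N → ℝ) →L[ℝ] (Fin N → ℝ)))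
    (hcont : ContinuousOn u (Set.Icc (0 : Fin N → ℝ) 1))
    (hdiff : ∀ x ∈ openCube N, HasFDerivAt u (Du x) x)
    (hint : IntegrableOn
      (fun x => LinearMap.trace ℝ (Fin N → ℝ) (Du x : (Fin N → ℝ) →ₗ[ℝ] (Fin N → ℝ)))
      (openCube N))
    (hbdry : ∀ x ∈ frontier (openCube N), u x = A.mulVec x) :
    (∫ x in openCube N,
        max (LinearMap.trace ℝ (Fin N → ℝ)
          (Du x : (Fin N → ℝ) →ₗ[ℝ] (Fin N → ℝ)) - B.trace) 0 ≥
      max (Matrix.trace (A - B)) 0) ∧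
    (∫ x in openCube N,
        max (-(LinearMap.trace ℝ (Fin N → ℝ)
          (Du x : (Fin N → ℝ) →ₗ[ℝ] (Fin N → ℝ)) - B.trace)) 0 ≥
      max (-(Matrix.trace (A - B))) 0) := by
  obtain ⟨n, rfl⟩ : ∃ n, N = n + 1 := ⟨N - 1, (Nat.succ_pred_eq_of_pos hN).symm⟩
  set f : (Fin (n+1) → ℝ) → ℝ := fun x => LinearMap.trace ℝ (Fin (n+1) → ℝ)
    (Du x : (Fin (n+1) → ℝ) →ₗ[ℝ] (Fin (n+1) → ℝ)) with hf
  have hvol : volume (openCube (n+1)) = 1 := by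
    rw [measure_congr (openCube_ae_eq (n+1)), Real.volume_Icc_pi]
    simp
  have hconst : IntegrableOn (fun _ : Fin (n+1) → ℝ => B.trace) (openCube (n+1)) := by
    refine integrableOn_const ?_
    rw [hvol]; exact ENNReal.one_ne_top
  have hg : IntegrableOn (fun x => f x - B.trace) (openCube (n+1)) := hint.sub hconst
  have hIg : ∫ x in openCube (n+1), (f x - B.trace) = Matrix.trace (A - B) := by
    rw [integral_sub hint hconst, integral_trace_eq n A u Du hcont hdiff hint hbdry,
      setIntegral_const, measureReal_def, hvol, Matrix.trace_sub]
    simp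
  constructor
  · have hpos : IntegrableOn (fun x => max (f x - B.trace) 0) (openCube (n+1)) :=
      hg.pos_part
    have h1 : Matrix.trace (A - B) ≤ ∫ x in openCube (n+1), max (f x - B.trace) 0 := by
      rw [← hIg]
      exact integral_mono hg hpos (fun x => le_max_left _ _)
    have h2 : (0:ℝ) ≤ ∫ x in openCube (n+1), max (f x - B.trace) 0 :=
      integral_nonneg (fun x => le_max_right _ _)
    exact max_le h1 h2
  · have hg' : IntegrableOn (fun x => -(f x - B.trace)) (openCube (n+1)) := hg.neg
    have hpos : IntegrableOn (fun x => max (-(f x - B.trace)) 0) (openCube (n+1)) :=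
      hg'.pos_part
    have h1 : -Matrix.trace (A - B) ≤ ∫ x in openCube (n+1), max (-(f x - B.trace)) 0 := by
      rw [← hIg, ← integral_neg]
      exact integral_mono hg' hpos (fun x => le_max_left _ _)
    have h2 : (0:ℝ) ≤ ∫ x in openCube (n+1), max (-(f x - B.trace)) 0 :=
      integral_nonneg (fun x => le_max_right _ _)
    exact max_le h1 h2
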